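/- Cutoff calculation for geometric eigenvalues: let ρ ∈ (0,1), p ∈ (0,1), q = 1-p, and t_N = (log N + log(p/q) + C)/(-2 log ρ). Then ∑_{n=1}^N C(N,n)(p/q)^n ρ^{2n t_N} = (1 + (p/q)ρ^{2t_N})^N - 1 → e^{e^{-C}} - 1 as N → ∞. -/

import Mathlib

open Finset Filter

theorem stmt_18 (ρ : ℝ) (hρ : 0 < ρ) (hρ1 : ρ < 1)
    (p q : ℝ) (hp : 0 < p) (hp1 : p < 1) (hq : q = 1 - p) (C : ℝ)
    (tN : ℕ → ℝ)
    (htN : ∀ N : ℕ, tN N = (Real.log N + Real.log (p / q) + C) / (-2 * Real.log ρ)) :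
    (∀ N : ℕ,
      ∑ n ∈ Finset.Icc 1 N, (N.choose n : ℝ) * (p / q) ^ n * ρ ^ (2 * (n : ℝ) * tN N)
        = (1 + (p / q) * ρ ^ (2 * tN N)) ^ N - 1)
    ∧ Filter.Tendsto (fun N : ℕ => (1 + (p / q) * ρ ^ (2 * tN N)) ^ N - 1)
        Filter.atTop (nhds (Real.exp (Real.exp (-C)) - 1)) := by
  have hq0 : 0 < q := by rw [hq]; linarith
  have hpq : 0 < p / q := div_pos hp hq0
  have hlogρ : Real.log ρ < 0 := Real.log_neg hρ hρ1
  constructor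
  · intro N
    have hterm : ∀ n ∈ Finset.Icc 1 N,
        (N.choose n : ℝ) * (p / q) ^ n * ρ ^ (2 * (n : ℝ) * tN N)
          = (N.choose n : ℝ) * ((p / q) * ρ ^ (2 * tN N)) ^ n := by
      intro n _
      have : ρ ^ (2 * (n : ℝ) * tN N) = (ρ ^ (2 * tN N)) ^ n := by
        rw [← Real.rpow_natCast (ρ ^ (2 * tN N)) n, ← Real.rpow_mul hρ.le]
        ring_nf
      rw [this, mul_pow]
      ring
    rw [Finset.sum_congr rfl hterm]
    set x := (p / q) * ρ ^ (2 * tN N) with hx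
    have hbin : ∑ n ∈ Finset.range (N + 1), (N.choose n : ℝ) * x ^ n = (1 + x) ^ N := by
      rw [show (1 + x) ^ N = (x + 1) ^ N by ring, add_pow]
      simp [mul_comm]
    have : Finset.Icc 1 N = Finset.range (N + 1) \ {0} := by
      ext n
      simp [Nat.lt_succ_iff, Nat.one_le_iff_ne_zero]
      tauto
    rw [this, Finset.sum_sdiff_eq_sub (by simp), hbin]
    simp
  · have key : ∀ N : ℕ, 1 ≤ N → (p / q) * ρ ^ (2 * tN N) = Real.exp (-C) / N := by
      intro N hN
      have hN0 : (0 : ℝ) < N := by exact_mod_cast hN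
      have h1 : ρ ^ (2 * tN N) = Real.exp (Real.log ρ * (2 * tN N)) :=
        Real.rpow_def_of_pos hρ _
      have h2 : Real.log ρ * (2 * tN N) = -(Real.log N + Real.log (p / q) + C) := by
        rw [htN N]
        field_simp [hlogρ.ne]
      rw [h1, h2,
        show -(Real.log N + Real.log (p / q) + C)
          = -Real.log (p / q) + (-C + -Real.log N) by ring,
        Real.exp_add, Real.exp_add, Real.exp_neg, Real.exp_log hpq,
        Real.exp_neg (Real.log (N:ℝ)), Real.exp_log hN0]
      field_simp
    have := Real.tendsto_one_add_div_pow_exp (Real.exp (-C))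
    refine Filter.Tendsto.congr' ?_ (this.sub tendsto_const_nhds)
    filter_upwards [Filter.eventually_ge_atTop 1] with N hN
    rw [key N hN]
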